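/- For all real numbers τ > 0 and ν > 0, the modified Bessel function of the second kind satisfies τ^ν · K_ν(τ) ≤ Γ(ν) · 2^(ν−1), where K_ν(τ) = (1/2) ∫₀^∞ y^(ν−1) e^(−(τ/2)(y + y⁻¹)) dy. -/

import Mathlib

open Real MeasureTheory

/-- The modified Bessel function of the second kind,
`K_ν(τ) = (1/2) ∫₀^∞ y^(ν−1) exp(−(τ/2)(y + 1/y)) dy`. -/
noncomputable def besselK (ν τ : ℝ) : ℝ :=
  (1 / 2) * ∫ y in Set.Ioi (0 : ℝ), y ^ (ν - 1) * Real.exp (-(τ / 2) * (y + y⁻¹))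

/-- For all `τ > 0` and `ν > 0`, `τ^ν · K_ν(τ) ≤ Γ(ν) · 2^(ν−1)`. -/
theorem stmt0 (τ ν : ℝ) (hτ : 0 < τ) (hν : 0 < ν) :
    τ ^ ν * besselK ν τ ≤ Real.Gamma ν * (2 : ℝ) ^ (ν - 1) := by
  have hb : (0 : ℝ) < τ / 2 := by linarith
  -- integrability of the dominating function
  have hInt2 : IntegrableOn (fun y : ℝ => y ^ (ν - 1) * Real.exp (-(τ / 2 * y)))
      (Set.Ioi 0) := by
    have := integrableOn_rpow_mul_exp_neg_mul_rpow (s := ν - 1) (p := 1) (b := τ / 2)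
      (by linarith) one_pos hb
    refine this.congr_fun (fun x hx => ?_) measurableSet_Ioi
    simp only [Real.rpow_one, neg_mul]
  -- pointwise bound on Ioi 0
  have hbd : ∀ y ∈ Set.Ioi (0 : ℝ),
      y ^ (ν - 1) * Real.exp (-(τ / 2) * (y + y⁻¹)) ≤
      y ^ (ν - 1) * Real.exp (-(τ / 2 * y)) := by
    intro y hy
    have hy0 : 0 < y := hy
    have h1 : -(τ / 2) * (y + y⁻¹) ≤ -(τ / 2 * y) := by
      have : 0 ≤ τ / 2 * y⁻¹ := by positivity
      nlinarith
    exact mul_le_mul_of_nonneg_left (Real.exp_le_exp.2 h1) (Real.rpow_nonneg hy0.le _)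
  -- integrability of the integrand
  have hInt1 : IntegrableOn (fun y : ℝ => y ^ (ν - 1) * Real.exp (-(τ / 2) * (y + y⁻¹)))
      (Set.Ioi 0) := by
    refine hInt2.mono' ?_ ?_
    · apply Measurable.aestronglyMeasurable
      fun_prop
    · filter_upwards [self_mem_ae_restrict measurableSet_Ioi] with y hy
      have hy0 : (0 : ℝ) < y := hy
      rw [Real.norm_eq_abs, abs_of_nonneg (by positivity)]
      exact hbd y hy
  have hmono : (∫ y in Set.Ioi (0 : ℝ), y ^ (ν - 1) * Real.exp (-(τ / 2) * (y + y⁻¹))) ≤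
      ∫ y in Set.Ioi (0 : ℝ), y ^ (ν - 1) * Real.exp (-(τ / 2 * y)) :=
    setIntegral_mono_on hInt1 hInt2 measurableSet_Ioi hbd
  have hval : (∫ y in Set.Ioi (0 : ℝ), y ^ (ν - 1) * Real.exp (-(τ / 2 * y))) =
      (1 / (τ / 2)) ^ ν * Real.Gamma ν :=
    Real.integral_rpow_mul_exp_neg_mul_Ioi hν hb
  have key : besselK ν τ ≤ (1 / 2) * ((1 / (τ / 2)) ^ ν * Real.Gamma ν) := by
    rw [besselK, ← hval]
    linarith
  have hτν : (0 : ℝ) < τ ^ ν := Real.rpow_pos_of_pos hτ ν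
  calc τ ^ ν * besselK ν τ ≤ τ ^ ν * ((1 / 2) * ((1 / (τ / 2)) ^ ν * Real.Gamma ν)) :=
        mul_le_mul_of_nonneg_left key hτν.le
    _ = Real.Gamma ν * (2 : ℝ) ^ (ν - 1) := by
        have h2ν : (0 : ℝ) < (2:ℝ) ^ ν := Real.rpow_pos_of_pos two_pos ν
        rw [one_div (τ / 2), ← Real.rpow_neg_one (τ / 2)]
        rw [← Real.rpow_mul hb.le, neg_one_mul, Real.rpow_neg hb.le,
          Real.div_rpow hτ.le (by norm_num : (0:ℝ) ≤ 2),
          Real.rpow_sub two_pos, Real.rpow_one]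
        field_simp
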